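/- Let d ≥ 1, μ ∈ M_c^+(ℝ^d), and 0 ≤ α ≤ β ≤ ∞. Let F(α,β) = {x ∈ supp(μ) : α ≤ d̲(μ,x) and d̄(μ,x) ≤ β}. Then dim_H F(α,β) ≤ f̲^LD_μ(α,β), with the convention dim_H ∅ = −∞. -/

import Mathlib

open MeasureTheory Metric Set Filter Topology
open scoped ENNReal NNReal

noncomputable section

/-- `ℝ^d` with the Euclidean metric. -/
abbrev Euc (d : ℕ) : Type := EuclideanSpace ℝ (Fin d)

/-- The topological support of a Borel measure on `ℝ^d`. -/
def msupp {d : ℕ} (μ : Measure (Euc d)) : Set (Euc d) :=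
  {x | ∀ r : ℝ, 0 < r → 0 < μ (closedBall x r)}

/-- `μ ∈ 𝓜_c^+(ℝ^d)`: a nonzero finite compactly supported Borel measure. -/
def McPlus {d : ℕ} (μ : Measure (Euc d)) : Prop :=
  IsFiniteMeasure μ ∧ μ ≠ 0 ∧ ∃ K : Set (Euc d), IsCompact K ∧ μ Kᶜ = 0

/-- Logarithm `ℝ≥0∞ → EReal`, with `log 0 = ⊥` and `log ⊤ = ⊤`. -/
def elog (x : ℝ≥0∞) : EReal :=
  if x = 0 then ⊥ else if x = ⊤ then ⊤ else ((Real.log x.toReal : ℝ) : EReal)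

/-- Lower local dimension `liminf_{r→0⁺} log μ(B(x,r)) / log r`, valued in `EReal`. -/
def dLow {d : ℕ} (μ : Measure (Euc d)) (x : Euc d) : EReal :=
  Filter.liminf
    (fun r : ℝ => elog (μ (closedBall x r)) * (((Real.log r)⁻¹ : ℝ) : EReal)) (𝓝[>] (0:ℝ))

/-- Upper local dimension `limsup_{r→0⁺} log μ(B(x,r)) / log r`, valued in `EReal`. -/
def dUp {d : ℕ} (μ : Measure (Euc d)) (x : Euc d) : EReal :=
  Filter.limsup
    (fun r : ℝ => elog (μ (closedBall x r)) * (((Real.log r)⁻¹ : ℝ) : EReal)) (𝓝[>] (0:ℝ))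

/-- The level set `E(μ,α,β)`. -/
def Eab {d : ℕ} (μ : Measure (Euc d)) (α β : EReal) : Set (Euc d) :=
  {x ∈ msupp μ | dLow μ x = α ∧ dUp μ x = β}

/-- The level set `E̲(μ,α)`. -/
def Elow {d : ℕ} (μ : Measure (Euc d)) (α : EReal) : Set (Euc d) :=
  {x ∈ msupp μ | dLow μ x = α}

/-- The level set `Ē(μ,α)`. -/
def Eup {d : ℕ} (μ : Measure (Euc d)) (α : EReal) : Set (Euc d) :=
  {x ∈ msupp μ | dUp μ x = α}

/-- The level set `E(μ,α) = E(μ,α,α)`. -/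
def Epoint {d : ℕ} (μ : Measure (Euc d)) (α : EReal) : Set (Euc d) := Eab μ α α

-- Hausdorff dimension with the convention `dim_H ∅ = −∞`, valued in `EReal`.
open Classical in
def dimHE {X : Type*} [EMetricSpace X] (s : Set X) : EReal :=
  if s = ∅ then ⊥ else ((dimH s : ℝ≥0∞) : EReal)

/-- A centered packing of `supp μ` by pairwise disjoint closed balls of radius `r`. -/
def IsPacking {d : ℕ} (μ : Measure (Euc d)) (r : ℝ) (P : Set (Euc d)) : Prop :=
  P ⊆ msupp μ ∧ P.PairwiseDisjoint fun x => closedBall x r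

/-- `sup { Σ_i μ(B(x_i,r))^q }` over all centered packings of radius `r`. -/
def packSum {d : ℕ} (μ : Measure (Euc d)) (q r : ℝ) : ℝ≥0∞ :=
  ⨆ (P : Set (Euc d)) (_ : IsPacking μ r P), ∑' x : P, μ (closedBall (x : Euc d) r) ^ q

/-- The lower `L^q`-spectrum `τ_μ`. -/
def tauLow {d : ℕ} (μ : Measure (Euc d)) (q : ℝ) : EReal :=
  Filter.liminf (fun r : ℝ => elog (packSum μ q r) * (((Real.log r)⁻¹ : ℝ) : EReal)) (𝓝[>] (0:ℝ))

/-- The upper `L^q`-spectrum `τ̄_μ`. -/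
def tauUp {d : ℕ} (μ : Measure (Euc d)) (q : ℝ) : EReal :=
  Filter.limsup (fun r : ℝ => elog (packSum μ q r) * (((Real.log r)⁻¹ : ℝ) : EReal)) (𝓝[>] (0:ℝ))

/-- Extended concave Legendre–Fenchel transform of `τ : ℝ → ℝ∪{−∞}` at `α ∈ ℝ∪{∞}`;
the `EReal` product `α * q` encodes the conventions `∞·q = −∞` for `q < 0`, `∞·0 = 0`. -/
def eLegendre (τ : ℝ → EReal) (α : EReal) : EReal :=
  sInf {v : EReal | ∃ q : ℝ, τ q ≠ ⊥ ∧ (α = ⊤ → q ≤ 0) ∧ v = α * (q : EReal) - τ q}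

/-- Legendre–Fenchel transform `f*` of a spectrum `f` defined on `ℝ∪{∞}`;
the `EReal` product `q * α` encodes the conventions `q·∞ = ±∞` for `q ≷ 0`, `0·∞ = 0`. -/
def specStar (f : EReal → EReal) (q : ℝ) : EReal :=
  sInf {v : EReal | ∃ α : EReal, α ≠ ⊥ ∧ f α ≠ ⊥ ∧ v = (q : EReal) * α - f α}

/-- `sup #{i : lo ≤ μ(B(x_i,r)) ≤ hi}` over all centered packings of radius `r`. -/
def ldCount {d : ℕ} (μ : Measure (Euc d)) (lo hi : ℝ≥0∞) (r : ℝ) : ℝ≥0∞ :=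
  ⨆ (P : Set (Euc d)) (_ : IsPacking μ r P),
    ({x ∈ P | lo ≤ μ (closedBall x r) ∧ μ (closedBall x r) ≤ hi}).encard

/-- `r ^ γ` for an extended exponent `γ`, with the convention `r^∞ = 0`. -/
def rpowE (r : ℝ) (γ : EReal) : ℝ≥0∞ :=
  if γ = ⊤ then 0 else if γ = ⊥ then ⊤ else ENNReal.ofReal (r ^ γ.toReal)

/-- The lower large-deviations spectrum `f̲^LD_μ(α,β)` for `0 ≤ α ≤ β ≤ ∞`. -/
def fLDlowAB {d : ℕ} (μ : Measure (Euc d)) (α β : EReal) : EReal :=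
  if α = ⊤ then
    ⨅ A : ℝ, Filter.liminf
      (fun r : ℝ => elog (ldCount μ 0 (ENNReal.ofReal (r ^ A)) r) * (((-Real.log r)⁻¹ : ℝ) : EReal))
      (𝓝[>] (0:ℝ))
  else
    ⨅ (ε : ℝ) (_ : 0 < ε), Filter.liminf
      (fun r : ℝ =>
        elog (ldCount μ (rpowE r (β + (ε : EReal))) (rpowE r (α - (ε : EReal))) r) *
          (((-Real.log r)⁻¹ : ℝ) : EReal))
      (𝓝[>] (0:ℝ))

/-- The lower large-deviations spectrum `f̲^LD_μ(α)`. -/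
def fLDlow {d : ℕ} (μ : Measure (Euc d)) (α : EReal) : EReal := fLDlowAB μ α α

/-- The upper large-deviations spectrum `f̄^LD_μ(α)`. -/
def fLDup {d : ℕ} (μ : Measure (Euc d)) (α : EReal) : EReal :=
  if α = ⊤ then
    ⨅ A : ℝ, Filter.limsup
      (fun r : ℝ => elog (ldCount μ 0 (ENNReal.ofReal (r ^ A)) r) * (((-Real.log r)⁻¹ : ℝ) : EReal))
      (𝓝[>] (0:ℝ))
  else
    ⨅ (ε : ℝ) (_ : 0 < ε), Filter.limsup
      (fun r : ℝ =>
        elog (ldCount μ (rpowE r (α + (ε : EReal))) (rpowE r (α - (ε : EReal))) r) *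
          (((-Real.log r)⁻¹ : ℝ) : EReal))
      (𝓝[>] (0:ℝ))

/-- `μ` is exact dimensional with dimension `D`. -/
def ExactDim {d : ℕ} (μ : Measure (Euc d)) (D : ℝ) : Prop :=
  ∀ᵐ x ∂μ, Filter.Tendsto (fun r : ℝ => Real.log (μ (closedBall x r)).toReal / Real.log r)
    (𝓝[>] (0:ℝ)) (𝓝 D)

/-- `μ` is homogeneously multifractal: the lower Hausdorff spectrum of the restriction of `μ`
to any closed ball whose interior meets `supp μ` coincides with that of `μ`. -/
def HMmeas {d : ℕ} (μ : Measure (Euc d)) : Prop :=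
  ∀ (c : Euc d) (R : ℝ), (interior (closedBall c R) ∩ msupp μ).Nonempty →
    ∀ α : EReal, 0 ≤ α →
      dimHE (Elow (μ.restrict (closedBall c R)) α) = dimHE (Elow μ α)

/-- The necessary properties of an `L^q`-spectrum in dimension `d`. -/
structure IsLqSpec (d : ℕ) (τ : ℝ → EReal) : Prop where
  ne_top : ∀ q : ℝ, τ q ≠ ⊤
  concave : ∀ q₁ q₂ t : ℝ, 0 ≤ t → t ≤ 1 →
    ((t : ℝ) : EReal) * τ q₁ + (((1 - t : ℝ)) : EReal) * τ q₂ ≤ τ (t * q₁ + (1 - t) * q₂)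
  mono : Monotone τ
  at_one : τ 1 = 0
  neg_d_le : -(((d : ℝ)) : EReal) ≤ τ 0
  le_zero : τ 0 ≤ 0
  dom : {q : ℝ | τ q ≠ ⊥} = Set.univ ∨ {q : ℝ | τ q ≠ ⊥} = Set.Ici 0
  star_nonneg : ∀ α : EReal, eLegendre τ α ≠ ⊥ → 0 ≤ eLegendre τ α

/-- The class `𝓕(d)` of candidate lower Hausdorff spectra, viewed as functions on
`ℝ∪{∞} ⊂ EReal` (the value at `⊥` is irrelevant: the domain condition forces `f ⊥ = ⊥`). -/
structure IsFd (d : ℕ) (f : EReal → EReal) : Prop where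
  hasFix : ∃ D : ℝ, f ((D : ℝ) : EReal) = ((D : ℝ) : EReal)
  dom_sub : {α : EReal | f α ≠ ⊥} ⊆ Set.Ici (0 : EReal)
  dom_closed : IsClosed {α : EReal | f α ≠ ⊥}
  range' : ∀ α : EReal, f α = ⊥ ∨ (0 ≤ f α ∧ f α ≤ ((d : ℝ) : EReal))
  usc : UpperSemicontinuousOn f {α : EReal | ⊥ < α}
  le_id : ∀ α : EReal, f α ≤ α

/-- Concavity of a spectrum on the real part of its domain. -/
def SpecConcave (f : EReal → EReal) : Prop :=
  ∀ α₁ α₂ t : ℝ, f ((α₁ : ℝ) : EReal) ≠ ⊥ → f ((α₂ : ℝ) : EReal) ≠ ⊥ → 0 ≤ t → t ≤ 1 →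
    ((t : ℝ) : EReal) * f ((α₁ : ℝ) : EReal) + (((1 - t : ℝ)) : EReal) * f ((α₂ : ℝ) : EReal) ≤
      f (((t * α₁ + (1 - t) * α₂ : ℝ)) : EReal)


/-! ### Auxiliary lemmas for Statement 16 -/

private lemma neg_log_pos {r : ℝ} (h0 : 0 < r) (h1 : r < 1) : 0 < -Real.log r := by
  have := Real.log_neg h0 h1; linarith

private lemma elog_coe {m : ℝ≥0∞} (hm0 : m ≠ 0) (hmT : m ≠ ⊤) :
    elog m = ((Real.log m.toReal : ℝ) : EReal) := by
  rw [elog, if_neg hm0, if_neg hmT]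

/-- From `elog N * (-log r)⁻¹ < z` deduce `N ≤ ofReal (r ^ (-z))`. -/
private lemma count_bound {N : ℝ≥0∞} {r z : ℝ} (h0 : 0 < r) (h1 : r < 1)
    (h : elog N * (((-Real.log r)⁻¹ : ℝ) : EReal) < (z : EReal)) :
    N ≤ ENNReal.ofReal (r ^ (-z)) := by
  set T : ℝ := -Real.log r with hT
  have hTpos : 0 < T := neg_log_pos h0 h1
  rcases eq_or_ne N 0 with h0'|hN0
  · simp [h0']
  rcases eq_or_ne N ⊤ with hT'|hNT
  · rw [hT', elog, if_neg (by simp), if_pos rfl,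
      EReal.top_mul_coe_of_pos (by positivity)] at h
    exact absurd h (by simp)
  have hNt : 0 < N.toReal := ENNReal.toReal_pos hN0 hNT
  rw [elog_coe hN0 hNT, ← EReal.coe_mul] at h
  have hreal : Real.log N.toReal * T⁻¹ < z := by exact_mod_cast h
  have h2 : Real.log N.toReal < z * T := by
    rw [← div_eq_mul_inv] at hreal
    exact (div_lt_iff₀ hTpos).mp hreal
  have h3 : z * T = Real.log (r ^ (-z)) := by
    rw [Real.log_rpow h0, hT]; ring
  rw [h3] at h2
  have h4 : N.toReal < r ^ (-z) :=
    (Real.log_lt_log_iff hNt (Real.rpow_pos_of_pos h0 _)).mp h2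
  calc N = ENNReal.ofReal N.toReal := (ENNReal.ofReal_toReal hNT).symm
    _ ≤ ENNReal.ofReal (r ^ (-z)) := ENNReal.ofReal_le_ofReal h4.le

/-- From `a < elog m * (log r)⁻¹` (with `0 < r < 1`) deduce `m ≤ ofReal (r ^ a)`. -/
private lemma point_upper {m : ℝ≥0∞} (hm0 : m ≠ 0) (hmT : m ≠ ⊤) {r a : ℝ}
    (h0 : 0 < r) (h1 : r < 1)
    (h : (a : EReal) < elog m * (((Real.log r)⁻¹ : ℝ) : EReal)) :
    m ≤ ENNReal.ofReal (r ^ a) := by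
  have hL : Real.log r < 0 := Real.log_neg h0 h1
  have hMt : 0 < m.toReal := ENNReal.toReal_pos hm0 hmT
  rw [elog_coe hm0 hmT, ← EReal.coe_mul] at h
  have hreal : a < Real.log m.toReal * (Real.log r)⁻¹ := by exact_mod_cast h
  rw [← div_eq_mul_inv] at hreal
  have h2 : Real.log m.toReal < a * Real.log r := (lt_div_iff_of_neg hL).mp hreal
  have h3 : a * Real.log r = Real.log (r ^ a) := (Real.log_rpow h0 a).symm
  rw [h3] at h2
  have h4 : m.toReal < r ^ a :=
    (Real.log_lt_log_iff hMt (Real.rpow_pos_of_pos h0 _)).mp h2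
  calc m = ENNReal.ofReal m.toReal := (ENNReal.ofReal_toReal hmT).symm
    _ ≤ ENNReal.ofReal (r ^ a) := ENNReal.ofReal_le_ofReal h4.le

/-- From `elog m * (log r)⁻¹ < b` (with `0 < r < 1`) deduce `ofReal (r ^ b) ≤ m`. -/
private lemma point_lower {m : ℝ≥0∞} (hm0 : m ≠ 0) (hmT : m ≠ ⊤) {r b : ℝ}
    (h0 : 0 < r) (h1 : r < 1)
    (h : elog m * (((Real.log r)⁻¹ : ℝ) : EReal) < (b : EReal)) :
    ENNReal.ofReal (r ^ b) ≤ m := by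
  have hL : Real.log r < 0 := Real.log_neg h0 h1
  have hMt : 0 < m.toReal := ENNReal.toReal_pos hm0 hmT
  rw [elog_coe hm0 hmT, ← EReal.coe_mul] at h
  have hreal : Real.log m.toReal * (Real.log r)⁻¹ < b := by exact_mod_cast h
  rw [← div_eq_mul_inv] at hreal
  have h2 : b * Real.log r < Real.log m.toReal := (div_lt_iff_of_neg hL).mp hreal
  have h3 : b * Real.log r = Real.log (r ^ b) := (Real.log_rpow h0 b).symm
  rw [h3] at h2
  have h4 : r ^ b < m.toReal :=
    (Real.log_lt_log_iff (Real.rpow_pos_of_pos h0 _) hMt).mp h2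
  calc ENNReal.ofReal (r ^ b) ≤ ENNReal.ofReal m.toReal := ENNReal.ofReal_le_ofReal h4.le
    _ = m := ENNReal.ofReal_toReal hmT

/-- A maximal `r`-packing of a subset of the support covers it at scale `2r`. -/
private lemma exists_packing_cover {d : ℕ} (μ : Measure (Euc d)) {G : Set (Euc d)}
    (hG : G ⊆ msupp μ) {r : ℝ} (hr : 0 < r) :
    ∃ P : Set (Euc d), P ⊆ G ∧ IsPacking μ r P ∧
      G ⊆ ⋃ p ∈ P, closedBall p (2 * r) := by
  set S : Set (Set (Euc d)) :=
    {P | P ⊆ G ∧ P.PairwiseDisjoint fun x => closedBall x r} with hS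
  have hchains : ∀ c ⊆ S, IsChain (· ⊆ ·) c → ∃ ub ∈ S, ∀ s ∈ c, s ⊆ ub := by
    intro c hcS hchain
    refine ⟨⋃₀ c, ⟨?_, ?_⟩, fun s hs => subset_sUnion_of_mem hs⟩
    · exact sUnion_subset fun s hs => (hcS hs).1
    · intro x hx y hy hxy
      obtain ⟨s, hs, hxs⟩ := hx
      obtain ⟨t, ht, hyt⟩ := hy
      rcases hchain.total hs ht with hst | hts
      · exact (hcS ht).2 (hst hxs) hyt hxy
      · exact (hcS hs).2 hxs (hts hyt) hxy
  obtain ⟨P, hPmax⟩ := zorn_subset S hchains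
  obtain ⟨⟨hPG, hPd⟩, hmax⟩ := hPmax
  refine ⟨P, hPG, ⟨hPG.trans hG, hPd⟩, ?_⟩
  intro x hx
  by_contra hxn
  have hfar : ∀ p ∈ P, Disjoint (closedBall x r) (closedBall p r) := by
    intro p hp
    have : x ∉ closedBall p (2 * r) := fun hmem => hxn (mem_biUnion hp hmem)
    have hd : 2 * r < dist x p := by
      by_contra hle
      exact this (mem_closedBall.mpr (not_lt.mp hle))
    exact closedBall_disjoint_closedBall (by linarith)
  have hxP : x ∉ P := by
    intro hxP
    have := hfar x hxP
    have hxball : x ∈ closedBall x r := mem_closedBall_self hr.le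
    exact (this.ne_of_mem hxball hxball) rfl
  have hins : insert x P ∈ S := by
    refine ⟨insert_subset hx hPG, hPd.insert fun j hj _ => hfar j hj⟩
  have := hmax hins (subset_insert x P)
  exact hxP (this (mem_insert x P))

private lemma elog_nonneg {N : ℝ≥0∞} (h : 1 ≤ N) : 0 ≤ elog N := by
  rcases eq_or_ne N ⊤ with hT|hT
  · rw [hT, elog, if_neg (by simp), if_pos rfl]; exact le_top
  · rw [elog_coe (by intro h0; rw [h0] at h; simp at h) hT]
    have h1 : (1:ℝ) ≤ N.toReal := by
      rw [← ENNReal.toReal_one]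
      exact ENNReal.toReal_mono hT h
    exact_mod_cast Real.log_nonneg h1

/-- A packing of a set where the measure bounds hold everywhere is counted by `ldCount`. -/
private lemma encard_le_ldCount {d : ℕ} (μ : Measure (Euc d)) {lo hi : ℝ≥0∞} {r : ℝ}
    {P : Set (Euc d)} (hP : IsPacking μ r P)
    (hb : ∀ x ∈ P, lo ≤ μ (closedBall x r) ∧ μ (closedBall x r) ≤ hi) :
    (P.encard : ℝ≥0∞) ≤ ldCount μ lo hi r := by
  have hset : {x ∈ P | lo ≤ μ (closedBall x r) ∧ μ (closedBall x r) ≤ hi} = P := by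
    ext x; simp only [mem_sep_iff, and_iff_left_iff_imp]
    exact hb x
  calc (P.encard : ℝ≥0∞)
      = ↑({x ∈ P | lo ≤ μ (closedBall x r) ∧ μ (closedBall x r) ≤ hi}).encard := by rw [hset]
    _ ≤ ldCount μ lo hi r := le_iSup₂ (f := fun (P : Set (Euc d)) (_ : IsPacking μ r P) =>
        (({x ∈ P | lo ≤ μ (closedBall x r) ∧ μ (closedBall x r) ≤ hi}).encard : ℝ≥0∞)) P hP

/-- Core covering argument: a set on which uniform measure bounds hold below scale `δ`
has Hausdorff dimension at most `z`, provided the packing counts are frequently `< z₀ < z`. -/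
private lemma core_dimH_le {d : ℕ} (μ : Measure (Euc d)) {G : Set (Euc d)}
    (lo hi : ℝ → ℝ≥0∞) {δ : ℝ} (hδ : 0 < δ) (hG : G ⊆ msupp μ)
    (hbound : ∀ x ∈ G, ∀ r : ℝ, 0 < r → r < δ →
      lo r ≤ μ (closedBall x r) ∧ μ (closedBall x r) ≤ hi r)
    {z₀ z : ℝ} (hzz : z₀ < z) (hz : 0 ≤ z)
    (hfreq : ∃ᶠ r in 𝓝[>] (0:ℝ),
      elog (ldCount μ (lo r) (hi r) r) * (((-Real.log r)⁻¹ : ℝ) : EReal) < (z₀ : EReal)) :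
    dimH G ≤ ENNReal.ofReal z := by
  -- choose a sequence of good radii
  have hsel : ∀ n : ℕ, ∃ r : ℝ, (0 < r ∧ r < min δ (min 1 (1 / (n + 1)))) ∧
      elog (ldCount μ (lo r) (hi r) r) * (((-Real.log r)⁻¹ : ℝ) : EReal) < (z₀ : EReal) := by
    intro n
    have hmem : Ioo (0:ℝ) (min δ (min 1 (1 / (n + 1)))) ∈ 𝓝[>] (0:ℝ) := by
      refine Ioo_mem_nhdsGT_of_mem ⟨le_refl _, ?_⟩
      have hn1 : (0:ℝ) < (n:ℝ) + 1 := by positivity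
      have h1 : (0:ℝ) < 1 / ((n:ℝ) + 1) := by positivity
      exact lt_min hδ (lt_min one_pos h1)
    obtain ⟨r, hrU, hrQ⟩ := frequently_iff.mp hfreq hmem
    exact ⟨r, ⟨hrU.1, hrU.2⟩, hrQ⟩
  choose R hR hQ using hsel
  have hR0 : ∀ n, 0 < R n := fun n => (hR n).1
  have hRδ : ∀ n, R n < δ := fun n => lt_of_lt_of_le (hR n).2 (min_le_left _ _)
  have hR1 : ∀ n, R n < 1 := fun n =>
    lt_of_lt_of_le (hR n).2 (le_trans (min_le_right _ _) (min_le_left _ _))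
  have hRn : ∀ n : ℕ, R n < 1 / (n + 1) := fun n =>
    lt_of_lt_of_le (hR n).2 (le_trans (min_le_right _ _) (min_le_right _ _))
  -- maximal packings
  have hpack : ∀ n : ℕ, ∃ P : Set (Euc d), P ⊆ G ∧ IsPacking μ (R n) P ∧
      G ⊆ ⋃ p ∈ P, closedBall p (2 * R n) := fun n => exists_packing_cover μ hG (hR0 n)
  choose P hPG hPpack hPcover using hpack
  -- cardinality bounds
  have hcard : ∀ n, ((P n).encard : ℝ≥0∞) ≤ ENNReal.ofReal ((R n) ^ (-z₀)) := by
    intro n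
    refine le_trans (encard_le_ldCount μ (hPpack n) ?_) (count_bound (hR0 n) (hR1 n) (hQ n))
    exact fun x hx => hbound x (hPG n hx) (R n) (hR0 n) (hRδ n)
  have hfin : ∀ n, (P n).Finite := by
    intro n
    rw [← Set.encard_ne_top_iff]
    intro htop
    have := hcard n
    rw [htop] at this
    simp at this
  haveI hft : ∀ n, Fintype ↥(P n) := fun n => (hfin n).fintype
  -- diameter bound for the covering balls
  have hdiam : ∀ (n : ℕ) (i : ↥(P n)),
      EMetric.diam (closedBall (i : Euc d) (2 * R n)) ≤ ENNReal.ofReal (4 * R n) := by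
    intro n i
    refine EMetric.diam_le fun x hx y hy => ?_
    rw [edist_dist]
    refine ENNReal.ofReal_le_ofReal ?_
    have h1 : dist x (i : Euc d) ≤ 2 * R n := mem_closedBall.mp hx
    have h2 : dist y (i : Euc d) ≤ 2 * R n := mem_closedBall.mp hy
    calc dist x y ≤ dist x (i : Euc d) + dist (i : Euc d) y := dist_triangle _ _ _
      _ ≤ 2 * R n + (2 * R n) := by rw [dist_comm (i : Euc d) y]; exact add_le_add h1 h2
      _ = 4 * R n := by ring
  have htend : Tendsto (fun n : ℕ => ENNReal.ofReal (4 * R n)) atTop (𝓝 0) := by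
    have hsq : Tendsto (fun n : ℕ => 4 * R n) atTop (𝓝 0) := by
      refine squeeze_zero (g := fun n : ℕ => 4 * (1 / ((n:ℝ) + 1)))
        (fun n => by have := hR0 n; positivity) (fun n => ?_) ?_
      · exact mul_le_mul_of_nonneg_left (hRn n).le (by norm_num)
      · simpa using tendsto_one_div_add_atTop_nhds_zero_nat.const_mul (4:ℝ)
    simpa using ENNReal.tendsto_ofReal hsq
  have hcover : ∀ n : ℕ, G ⊆ ⋃ i : ↥(P n), closedBall (i : Euc d) (2 * R n) := by
    intro n x hx
    obtain ⟨p, hp, hxp⟩ := mem_iUnion₂.mp (hPcover n hx)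
    exact mem_iUnion.mpr ⟨⟨p, hp⟩, hxp⟩
  have hle := Measure.hausdorffMeasure_le_liminf_sum z G (fun n : ℕ => ENNReal.ofReal (4 * R n))
    htend (fun n (i : ↥(P n)) => closedBall (i : Euc d) (2 * R n))
    (Eventually.of_forall hdiam) (Eventually.of_forall hcover)
  -- per-n bound for the sums
  have hsum : ∀ n : ℕ,
      ∑ i : ↥(P n), EMetric.diam (closedBall (i : Euc d) (2 * R n)) ^ z
        ≤ ENNReal.ofReal (4 ^ z) := by
    intro n
    calc ∑ i : ↥(P n), EMetric.diam (closedBall (i : Euc d) (2 * R n)) ^ z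
        ≤ ∑ _i : ↥(P n), (ENNReal.ofReal (4 * R n)) ^ z :=
          Finset.sum_le_sum fun i _ => ENNReal.rpow_le_rpow (hdiam n i) hz
      _ = (Fintype.card ↥(P n) : ℝ≥0∞) * (ENNReal.ofReal (4 * R n)) ^ z := by
          rw [Finset.sum_const, Finset.card_univ, nsmul_eq_mul]
      _ ≤ ENNReal.ofReal ((R n) ^ (-z₀)) * (ENNReal.ofReal (4 * R n)) ^ z := by
          refine mul_le_mul_left ?_ _
          have hcc : ((P n).encard : ℝ≥0∞) = (Fintype.card ↥(P n) : ℝ≥0∞) := by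
            rw [Set.encard_eq_coe_toFinset_card, Set.toFinset_card]
            simp
            rw [← (hfin n).cast_ncard_eq, ENat.toENNReal_coe]
          rw [← hcc]; exact hcard n
      _ ≤ ENNReal.ofReal (4 ^ z) := by
          rw [ENNReal.ofReal_rpow_of_pos (by have := hR0 n; positivity),
            ← ENNReal.ofReal_mul (by have := hR0 n; positivity)]
          refine ENNReal.ofReal_le_ofReal ?_
          have hre : (R n) ^ (-z₀) * (4 * R n) ^ z = 4 ^ z * (R n) ^ (z - z₀) := by
            rw [Real.mul_rpow (by norm_num) (hR0 n).le]
            calc (R n) ^ (-z₀) * (4 ^ z * (R n) ^ z)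
                = 4 ^ z * ((R n) ^ (-z₀) * (R n) ^ z) := by ring
              _ = 4 ^ z * (R n) ^ (-z₀ + z) := by rw [← Real.rpow_add (hR0 n)]
              _ = 4 ^ z * (R n) ^ (z - z₀) := by ring_nf
          rw [hre]
          calc (4:ℝ) ^ z * (R n) ^ (z - z₀) ≤ 4 ^ z * 1 := by
                refine mul_le_mul_of_nonneg_left ?_ (by positivity)
                exact Real.rpow_le_one (hR0 n).le (hR1 n).le (by linarith)
            _ = 4 ^ z := mul_one _
  have hH : μH[z] G ≤ ENNReal.ofReal (4 ^ z) := by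
    refine le_trans hle (le_trans (liminf_le_liminf (Eventually.of_forall hsum)) ?_)
    simp [liminf_const]
  have hne : μH[((z.toNNReal : ℝ≥0) : ℝ)] G ≠ ⊤ := by
    rw [Real.coe_toNNReal z hz]
    exact ne_top_of_le_ne_top ENNReal.ofReal_ne_top hH
  exact dimH_le_of_hausdorffMeasure_ne_top hne

/-- The key estimate: the Hausdorff dimension of a set of points whose ball measures
eventually satisfy the bounds `lo`, `hi` is controlled by the packing-count liminf. -/
private lemma key_dimHE_le {d : ℕ} (μ : Measure (Euc d)) (F : Set (Euc d))
    (lo hi : ℝ → ℝ≥0∞) (hFs : F ⊆ msupp μ)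
    (hF : ∀ x ∈ F, ∀ᶠ r in 𝓝[>] (0:ℝ),
      lo r ≤ μ (closedBall x r) ∧ μ (closedBall x r) ≤ hi r) :
    dimHE F ≤ Filter.liminf
      (fun r : ℝ => elog (ldCount μ (lo r) (hi r) r) * (((-Real.log r)⁻¹ : ℝ) : EReal))
      (𝓝[>] (0:ℝ)) := by
  classical
  set L := Filter.liminf
      (fun r : ℝ => elog (ldCount μ (lo r) (hi r) r) * (((-Real.log r)⁻¹ : ℝ) : EReal))
      (𝓝[>] (0:ℝ)) with hL
  rcases eq_or_ne F ∅ with hFe | hFe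
  · rw [dimHE, if_pos hFe]; exact bot_le
  rw [dimHE, if_neg hFe]
  -- the sets Gₙ of points where the bounds hold uniformly below scale 1/(n+1)
  set G : ℕ → Set (Euc d) := fun n =>
    {x ∈ F | ∀ r : ℝ, 0 < r → r < 1 / (n + 1) →
      lo r ≤ μ (closedBall x r) ∧ μ (closedBall x r) ≤ hi r} with hG
  have hFU : F = ⋃ n, G n := by
    apply Subset.antisymm
    · intro x hx
      obtain ⟨u, hu, hsub⟩ := mem_nhdsGT_iff_exists_Ioo_subset.mp (hF x hx)
      obtain ⟨n, hn⟩ := exists_nat_one_div_lt (mem_Ioi.mp hu)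
      refine mem_iUnion.mpr ⟨n, hx, fun r hr0 hr1 => hsub ⟨hr0, lt_trans hr1 hn⟩⟩
    · exact iUnion_subset fun n => sep_subset _ _
  -- main step: for every real z with L < z, dimH F ≤ ofReal z and 0 ≤ z
  have hmain : ∀ z : ℝ, L < (z : EReal) → dimH F ≤ ENNReal.ofReal z ∧ (0:ℝ) ≤ z := by
    intro z hz
    obtain ⟨z₀, hLz₀, hz₀z⟩ := EReal.exists_between_coe_real hz
    have hz₀z' : z₀ < z := by exact_mod_cast hz₀z
    have hfreq : ∃ᶠ r in 𝓝[>] (0:ℝ),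
        elog (ldCount μ (lo r) (hi r) r) * (((-Real.log r)⁻¹ : ℝ) : EReal) < (z₀ : EReal) :=
      frequently_lt_of_liminf_lt (by isBoundedDefault) hLz₀
    -- positivity of z₀ from nonemptiness of F
    have hz₀pos : 0 < z₀ := by
      obtain ⟨x₀, hx₀⟩ := nonempty_iff_ne_empty.mpr hFe
      have hx₀U : x₀ ∈ ⋃ n, G n := hFU ▸ hx₀
      obtain ⟨n₀, hn₀⟩ := mem_iUnion.mp hx₀U
      have hmem : Ioo (0:ℝ) (min 1 (1 / (n₀ + 1))) ∈ 𝓝[>] (0:ℝ) := by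
        refine Ioo_mem_nhdsGT_of_mem ⟨le_refl _, ?_⟩
        have hn1 : (0:ℝ) < (n₀:ℝ) + 1 := by positivity
        exact lt_min one_pos (by positivity)
      obtain ⟨r, hrU, hrQ⟩ := frequently_iff.mp hfreq hmem
      have hr0 : 0 < r := hrU.1
      have hr1 : r < 1 := lt_of_lt_of_le hrU.2 (min_le_left _ _)
      have hrn : r < 1 / (n₀ + 1) := lt_of_lt_of_le hrU.2 (min_le_right _ _)
      -- the singleton packing {x₀} is counted
      have hsingle : (1:ℝ≥0∞) ≤ ldCount μ (lo r) (hi r) r := by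
        have hpack : IsPacking μ r {x₀} :=
          ⟨singleton_subset_iff.mpr (hFs hn₀.1), pairwiseDisjoint_singleton _ _⟩
        have hb : ∀ y ∈ ({x₀} : Set (Euc d)),
            lo r ≤ μ (closedBall y r) ∧ μ (closedBall y r) ≤ hi r := by
          intro y hy
          rw [mem_singleton_iff.mp hy]
          exact hn₀.2 r hr0 hrn
        have := encard_le_ldCount μ hpack hb
        simpa using this
      have h0Q : (0:EReal) ≤
          elog (ldCount μ (lo r) (hi r) r) * (((-Real.log r)⁻¹ : ℝ) : EReal) := by
        refine mul_nonneg (elog_nonneg hsingle) ?_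
        have := neg_log_pos hr0 hr1
        exact_mod_cast le_of_lt (inv_pos.mpr this)
      have : (0:EReal) < (z₀ : EReal) := lt_of_le_of_lt h0Q hrQ
      exact_mod_cast this
    have hzpos : (0:ℝ) ≤ z := le_of_lt (lt_trans hz₀pos hz₀z')
    refine ⟨?_, hzpos⟩
    rw [hFU, dimH_iUnion]
    refine iSup_le fun n => ?_
    refine core_dimH_le μ lo hi (δ := 1 / (n + 1)) (by positivity)
      (fun x hx => hFs (sep_subset _ _ hx)) (fun x hx => hx.2) hz₀z' hzpos hfreq
  -- conclude
  by_contra hcon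
  have hlt : L < ((dimH F : ℝ≥0∞) : EReal) := not_le.mp hcon
  obtain ⟨z, hLz, hzd⟩ := EReal.exists_between_coe_real hlt
  obtain ⟨hdim, hz0⟩ := hmain z hLz
  have : ((dimH F : ℝ≥0∞) : EReal) ≤ (z : EReal) := by
    refine le_trans (EReal.coe_ennreal_le_coe_ennreal_iff.mpr hdim) ?_
    rw [EReal.coe_ennreal_ofReal, max_eq_left hz0]
  exact absurd hzd (not_lt.mpr this)

/-- from Section 5.2: `dim_H F(α,β) ≤ f̲^LD_μ(α,β)` where
`F(α,β) = {x ∈ supp μ : α ≤ d̲(μ,x), d̄(μ,x) ≤ β}`. -/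
theorem statement16 (d : ℕ) (hd : 1 ≤ d) (μ : Measure (Euc d)) (hμ : McPlus μ)
    (α β : EReal) (h0 : 0 ≤ α) (hab : α ≤ β) :
    dimHE {x ∈ msupp μ | α ≤ dLow μ x ∧ dUp μ x ≤ β} ≤ fLDlowAB μ α β := by
  obtain ⟨hfin, -, -⟩ := hμ
  haveI := hfin
  set F := {x ∈ msupp μ | α ≤ dLow μ x ∧ dUp μ x ≤ β} with hFdef
  have hFs : F ⊆ msupp μ := fun x hx => hx.1
  have hsmall : ∀ᶠ r in 𝓝[>] (0:ℝ), 0 < r ∧ r < 1 := by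
    have hIoo : Ioo (0:ℝ) 1 ∈ 𝓝[>] (0:ℝ) := Ioo_mem_nhdsGT_of_mem ⟨le_refl _, one_pos⟩
    filter_upwards [hIoo] with r hr using ⟨hr.1, hr.2⟩
  have hmball : ∀ x ∈ msupp μ, ∀ r : ℝ, 0 < r →
      μ (closedBall x r) ≠ 0 ∧ μ (closedBall x r) ≠ ⊤ :=
    fun x hx r hr => ⟨(hx r hr).ne', measure_ne_top μ _⟩
  rw [fLDlowAB]
  by_cases hα : α = ⊤
  · rw [if_pos hα]
    refine le_iInf fun A => ?_
    refine key_dimHE_le μ F _ _ hFs ?_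
    intro x hx
    have hdl : ((A : ℝ) : EReal) < dLow μ x := by
      have htop : dLow μ x = ⊤ := top_le_iff.mp (hα ▸ hx.2.1)
      rw [htop]; exact EReal.coe_lt_top A
    have hev := eventually_lt_of_lt_liminf hdl
    filter_upwards [hev, hsmall] with r h1 h2
    obtain ⟨hm0, hmT⟩ := hmball x hx.1 r h2.1
    exact ⟨zero_le, point_upper hm0 hmT h2.1 h2.2 h1⟩
  · rw [if_neg hα]
    have hαb : α ≠ ⊥ := fun hb => by rw [hb] at h0; exact absurd h0 (by simp)
    set a := α.toReal with ha
    have hαa : α = (a : EReal) := (EReal.coe_toReal hα hαb).symm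
    refine le_iInf fun ε => le_iInf fun hε => ?_
    refine key_dimHE_le μ F _ _ hFs ?_
    intro x hx
    have hae : α - (ε : EReal) = ((a - ε : ℝ) : EReal) := by
      rw [hαa, ← EReal.coe_sub]
    have hrw1 : ∀ r : ℝ, rpowE r (α - (ε : EReal)) = ENNReal.ofReal (r ^ (a - ε)) := by
      intro r
      rw [hae, rpowE, if_neg (EReal.coe_ne_top _), if_neg (EReal.coe_ne_bot _),
        EReal.toReal_coe]
    have h1 : ((a - ε : ℝ) : EReal) < dLow μ x := by
      refine lt_of_lt_of_le ?_ (hαa ▸ hx.2.1)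
      exact_mod_cast sub_lt_self a hε
    have hev1 := eventually_lt_of_lt_liminf h1
    by_cases hβ : β = ⊤
    · have hrw2 : ∀ r : ℝ, rpowE r (β + (ε : EReal)) = 0 := by
        intro r
        rw [hβ, EReal.top_add_coe, rpowE, if_pos rfl]
      filter_upwards [hev1, hsmall] with r e1 e2
      obtain ⟨hm0, hmT⟩ := hmball x hx.1 r e2.1
      rw [hrw1, hrw2]
      exact ⟨zero_le, point_upper hm0 hmT e2.1 e2.2 e1⟩
    · have hβb : β ≠ ⊥ := fun hb => by
        rw [hb] at hab
        exact hαb (le_bot_iff.mp hab)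
      set b := β.toReal with hb
      have hβa : β = (b : EReal) := (EReal.coe_toReal hβ hβb).symm
      have hbe : β + (ε : EReal) = ((b + ε : ℝ) : EReal) := by
        rw [hβa, ← EReal.coe_add]
      have hrw2 : ∀ r : ℝ, rpowE r (β + (ε : EReal)) = ENNReal.ofReal (r ^ (b + ε)) := by
        intro r
        rw [hbe, rpowE, if_neg (EReal.coe_ne_top _), if_neg (EReal.coe_ne_bot _),
          EReal.toReal_coe]
      have h2 : dUp μ x < ((b + ε : ℝ) : EReal) := by
        refine lt_of_le_of_lt (hβa ▸ hx.2.2) ?_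
        exact_mod_cast lt_add_of_pos_right b hε
      have hev2 := eventually_lt_of_limsup_lt h2
      filter_upwards [hev1, hev2, hsmall] with r e1 e2 e3
      obtain ⟨hm0, hmT⟩ := hmball x hx.1 r e3.1
      rw [hrw1, hrw2]
      exact ⟨point_lower hm0 hmT e3.1 e3.2 e2, point_upper hm0 hmT e3.1 e3.2 e1⟩

end
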